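/- Let q be a real number with q > 0 and q ≠ 1. Then for all integers n ≥ 1 and N ≥ 1, n · Σ_{k=0}^{N−1} q^{2k} · [k]^{n−1} + (q−1) · Σ_{k=0}^{N−1} q^k · [k]^n = q^N · β_n(N) − β_n(0). -/

import Mathlib

open Finset

/-- The q-bracket: `[x] = (q^x - 1)/(q - 1)`. -/
noncomputable def qb (q x : ℝ) : ℝ := (q ^ x - 1) / (q - 1)

/-- The Carlitz q-Bernoulli polynomials `β_n(x)`. -/
noncomputable def carlitzBeta (q : ℝ) (n : ℕ) (x : ℝ) : ℝ :=
  ((q - 1) ^ n)⁻¹ *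
    ∑ k ∈ range (n + 1),
      (-1 : ℝ) ^ (n - k) * (n.choose k : ℝ) *
        (((k : ℝ) + 1) / qb q ((k : ℝ) + 1)) * q ^ ((k : ℝ) * x)

lemma my_sub_one_pow (n : ℕ) (t : ℝ) :
    (t - 1) ^ n = ∑ j ∈ range (n + 1), (-1 : ℝ) ^ (n - j) * (n.choose j) * t ^ j := by
  rw [sub_pow]
  refine sum_congr rfl fun j hj => ?_
  rw [mem_range] at hj
  have h : (-1 : ℝ) ^ (j + n) = (-1) ^ (n - j) := by
    rw [show j + n = (n - j) + 2 * j by omega, pow_add]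
    simp [pow_mul]
  rw [h]; ring

lemma polyA (m : ℕ) (t : ℝ) :
    ∑ j ∈ range (m + 2), (-1 : ℝ) ^ (m + 1 - j) * ((m + 1).choose j) * ((j : ℝ) + 1) * t ^ j
      = ((m : ℝ) + 1) * t * (t - 1) ^ m + (t - 1) ^ (m + 1) := by
  have split : ∀ j ∈ range (m + 2),
      (-1 : ℝ) ^ (m + 1 - j) * ((m + 1).choose j) * ((j : ℝ) + 1) * t ^ j
        = (-1 : ℝ) ^ (m + 1 - j) * ((m + 1).choose j) * (j : ℝ) * t ^ j
          + (-1 : ℝ) ^ (m + 1 - j) * ((m + 1).choose j) * t ^ j := by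
    intro j _; ring
  rw [sum_congr rfl split, sum_add_distrib, my_sub_one_pow (m + 1) t]
  congr 1
  rw [sum_range_succ']
  simp only [Nat.cast_zero, mul_zero, zero_mul, add_zero]
  rw [my_sub_one_pow m t, mul_sum]
  refine sum_congr rfl fun i hi => ?_
  have hc : ((m + 1).choose (i + 1) : ℝ) * ((i : ℝ) + 1) = ((m : ℝ) + 1) * (m.choose i) := by
    have h := Nat.add_one_mul_choose_eq m i
    have h2 : ((m + 1) * m.choose i : ℕ) = ((m + 1).choose (i + 1) * (i + 1) : ℕ) := h
    exact_mod_cast congrArg (Nat.cast : ℕ → ℝ) h2.symm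
  have hs : m + 1 - (i + 1) = m - i := by omega
  rw [hs]
  push_cast
  linear_combination ((-1:ℝ)^(m-i) * t^(i+1)) * hc

lemma pow_sub_one_ne (q : ℝ) (hq : 0 < q) (hq1 : q ≠ 1) (j : ℕ) : q ^ (j + 1) - 1 ≠ 0 := by
  rcases lt_or_gt_of_ne hq1 with h | h
  · have : q ^ (j + 1) < 1 := pow_lt_one₀ hq.le h (Nat.succ_ne_zero j)
    linarith
  · have : 1 < q ^ (j + 1) := one_lt_pow₀ h (Nat.succ_ne_zero j)
    linarith

lemma beta_nat (q : ℝ) (hq : 0 < q) (n k : ℕ) :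
    carlitzBeta q n (k : ℝ) = ((q - 1) ^ n)⁻¹ *
      ∑ j ∈ range (n + 1),
        (-1 : ℝ) ^ (n - j) * (n.choose j : ℝ) *
          (((j : ℝ) + 1) * (q - 1) / (q ^ (j + 1) - 1)) * (q ^ k) ^ j := by
  unfold carlitzBeta qb
  congr 1
  refine sum_congr rfl fun j _ => ?_
  have e1 : q ^ ((j : ℝ) * (k : ℝ)) = (q ^ k) ^ j := by
    rw [show (j : ℝ) * (k : ℝ) = ((j * k : ℕ) : ℝ) by push_cast; ring,
      Real.rpow_natCast, mul_comm j k, pow_mul]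
  have e2 : q ^ ((j : ℝ) + 1) = q ^ (j + 1) := by
    rw [show (j : ℝ) + 1 = ((j + 1 : ℕ) : ℝ) by push_cast; ring, Real.rpow_natCast]
  rw [e1, e2, div_div_eq_mul_div]

lemma step (q : ℝ) (hq : 0 < q) (hq1 : q ≠ 1) (m k : ℕ) :
    ((m : ℝ) + 1) * (q ^ (2 * k) * (qb q (k : ℝ)) ^ m)
      + (q - 1) * (q ^ k * (qb q (k : ℝ)) ^ (m + 1))
      = q ^ (k + 1) * carlitzBeta q (m + 1) ((k + 1 : ℕ) : ℝ)
        - q ^ k * carlitzBeta q (m + 1) (k : ℝ) := by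
  have hq1' : q - 1 ≠ 0 := sub_ne_zero.mpr hq1
  rw [beta_nat q hq, beta_nat q hq]
  have rearr : ∀ S1 S2 : ℝ, q ^ (k + 1) * (((q - 1) ^ (m + 1))⁻¹ * S1)
      - q ^ k * (((q - 1) ^ (m + 1))⁻¹ * S2)
      = ((q - 1) ^ (m + 1))⁻¹ * (q ^ (k + 1) * S1 - q ^ k * S2) := by intros; ring
  rw [rearr, mul_sum, mul_sum, ← sum_sub_distrib]
  have key : ∀ j ∈ range (m + 2),
      q ^ (k + 1) * ((-1 : ℝ) ^ (m + 1 - j) * ((m + 1).choose j : ℝ) *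
          (((j : ℝ) + 1) * (q - 1) / (q ^ (j + 1) - 1)) * (q ^ (k + 1)) ^ j)
        - q ^ k * ((-1 : ℝ) ^ (m + 1 - j) * ((m + 1).choose j : ℝ) *
          (((j : ℝ) + 1) * (q - 1) / (q ^ (j + 1) - 1)) * (q ^ k) ^ j)
      = (q - 1) * q ^ k *
          ((-1 : ℝ) ^ (m + 1 - j) * ((m + 1).choose j : ℝ) * ((j : ℝ) + 1) * (q ^ k) ^ j) := by
    intro j _
    have hB := pow_sub_one_ne q hq hq1 j
    have e1 : q ^ (k + 1) * (q ^ (k + 1)) ^ j = q ^ k * (q ^ k) ^ j * q ^ (j + 1) := by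
      rw [← pow_mul, ← pow_mul, ← pow_add, ← pow_add, ← pow_add]; congr 1; ring
    field_simp
    linear_combination ((-1 : ℝ) ^ (m + 1 - j) * ((m + 1).choose j : ℝ) * ((j : ℝ) + 1) * (q - 1)) * e1
  rw [sum_congr rfl key, ← mul_sum, polyA m (q ^ k)]
  have hqb : qb q (k : ℝ) = (q ^ k - 1) / (q - 1) := by
    unfold qb; rw [Real.rpow_natCast]
  rw [hqb, two_mul, pow_add, div_pow, div_pow]
  field_simp
  ring

theorem q_power_sum_via_beta (q : ℝ) (hq : 0 < q) (hq1 : q ≠ 1) :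
    ∀ n N : ℕ, 1 ≤ n → 1 ≤ N →
      (n : ℝ) * ∑ k ∈ range N, q ^ (2 * k) * (qb q k) ^ (n - 1)
        + (q - 1) * ∑ k ∈ range N, q ^ k * (qb q k) ^ n
        = q ^ N * carlitzBeta q n (N : ℝ) - carlitzBeta q n 0 := by
  intro n N hn hN
  obtain ⟨m, rfl⟩ : ∃ m, n = m + 1 := ⟨n - 1, by omega⟩
  rw [mul_sum, mul_sum, ← sum_add_distrib]
  have congr1 : ∀ k ∈ range N,
      ((m + 1 : ℕ) : ℝ) * (q ^ (2 * k) * (qb q (k : ℝ)) ^ (m + 1 - 1))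
        + (q - 1) * (q ^ k * (qb q (k : ℝ)) ^ (m + 1))
      = (fun i : ℕ => q ^ i * carlitzBeta q (m + 1) (i : ℝ)) (k + 1)
        - (fun i : ℕ => q ^ i * carlitzBeta q (m + 1) (i : ℝ)) k := by
    intro k _
    simp only [Nat.add_sub_cancel]
    push_cast
    have := step q hq hq1 m k
    push_cast at this
    linarith [this]
  rw [sum_congr rfl congr1, Finset.sum_range_sub (fun i : ℕ => q ^ i * carlitzBeta q (m + 1) (i : ℝ)) N]
  norm_num
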